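/- For every natural number n ≥ 2 and every real ε with 1/n ≤ ε ≤ 1, the inequality (εn − 1)^{n−1} ≤ ε^n (n − 1)^{n−1} holds. -/

import Mathlib

/-- For every natural `n ≥ 2` and every real `ε` with
`1/n ≤ ε ≤ 1`, we have `(εn - 1)^(n-1) ≤ ε^n (n-1)^(n-1)`. -/
theorem stmt_9 (n : ℕ) (hn : 2 ≤ n) (ε : ℝ) (hε1 : 1 / (n : ℝ) ≤ ε) (hε2 : ε ≤ 1) :
    (ε * n - 1) ^ (n - 1) ≤ ε ^ n * ((n : ℝ) - 1) ^ (n - 1) := by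
  have hn2 : (2:ℝ) ≤ (n:ℝ) := by exact_mod_cast hn
  have hnpos : (0:ℝ) < n := by linarith
  have h1 : (1:ℝ) ≤ ε * n := by
    rw [div_le_iff₀ hnpos] at hε1; linarith
  have hεpos : (0:ℝ) < ε := lt_of_lt_of_le (by positivity) hε1
  have hnum : (0:ℝ) ≤ ε * n - 1 := by linarith
  have hden : (0:ℝ) < (n:ℝ) - 1 := by linarith
  set a : ℝ := (ε * n - 1) / ((n:ℝ) - 1) with ha
  have hapos : 0 ≤ a := div_nonneg hnum hden.le
  have hw1 : (0:ℝ) ≤ ((n:ℝ)-1)/n := by positivity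
  have hw2 : (0:ℝ) ≤ 1/(n:ℝ) := by positivity
  have hsum : ((n:ℝ)-1)/n + 1/n = 1 := by field_simp; ring
  have hkey : a ^ (((n:ℝ)-1)/n) ≤ ε := by
    have h := Real.geom_mean_le_arith_mean2_weighted hw1 hw2 hapos zero_le_one hsum
    calc a ^ (((n:ℝ)-1)/n) = a ^ (((n:ℝ)-1)/n) * (1:ℝ) ^ ((1:ℝ)/n) := by
          rw [Real.one_rpow, mul_one]
      _ ≤ ((n:ℝ)-1)/n * a + 1/n * 1 := h
      _ = ε := by rw [ha]; field_simp; ring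
  have hpow : a ^ ((n:ℝ)-1) ≤ ε ^ (n:ℝ) := by
    have h2 := Real.rpow_le_rpow (Real.rpow_nonneg hapos _) hkey (le_of_lt hnpos)
    rwa [← Real.rpow_mul hapos, div_mul_cancel₀ _ (ne_of_gt hnpos)] at h2
  have hcast : ((n:ℝ)-1) = ((n-1 : ℕ) : ℝ) := by
    have : (1:ℕ) ≤ n := by omega
    push_cast [this]; ring
  have hfin : a ^ (n-1) ≤ ε ^ n := by
    have := hpow
    rwa [hcast, Real.rpow_natCast, Real.rpow_natCast] at this
  have := mul_le_mul_of_nonneg_right hfin (pow_nonneg hden.le (n-1))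
  calc (ε * n - 1) ^ (n - 1) = a ^ (n-1) * ((n:ℝ)-1)^(n-1) := by
        rw [ha, div_pow, div_mul_cancel₀]
        exact pow_ne_zero _ (ne_of_gt hden)
    _ ≤ ε ^ n * ((n:ℝ)-1)^(n-1) := this
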